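/- Let F = {f_n} be a J-orthogonal Schauder basis of (H, (·,·)) that is a J-frame, and let f ∈ H. Then f belongs to the energetic linear manifold 𝔇 = H ∩ Ĥ if and only if the sequence {[f, f_n]}_{n∈ℕ} belongs to l²(ℕ). -/

import Mathlib

noncomputable section
open Filter Topology

namespace KreinStmt

local notation "⟪" x ", " y "⟫" => @inner ℂ _ _ x y

variable {H : Type} [NormedAddCommGroup H] [InnerProductSpace ℂ H] [CompleteSpace H]

/-- The indefinite inner product `[f,g]` of the Krein space with fundamental symmetry `J`. -/
def indef (J : H →L[ℂ] H) (f g : H) : ℂ := ⟪J f, g⟫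

/-- `J` is a fundamental symmetry: a self-adjoint involution on the Hilbert space `H`. -/
def IsFundSym (J : H →L[ℂ] H) : Prop :=
  (∀ f g : H, ⟪J f, g⟫ = ⟪f, J g⟫) ∧ ∀ f : H, J (J f) = f

/-- `M` is a (closed) positive subspace of the Krein space. -/
def IsPos (J : H →L[ℂ] H) (M : Submodule ℂ H) : Prop :=
  IsClosed (M : Set H) ∧ ∀ f ∈ M, f ≠ 0 → 0 < (indef J f f).re

/-- `M` is a (closed) negative subspace of the Krein space. -/
def IsNeg (J : H →L[ℂ] H) (M : Submodule ℂ H) : Prop :=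
  IsClosed (M : Set H) ∧ ∀ f ∈ M, f ≠ 0 → (indef J f f).re < 0

/-- Maximal positive subspace. -/
def IsMaxPos (J : H →L[ℂ] H) (M : Submodule ℂ H) : Prop :=
  IsPos J M ∧ ∀ M' : Submodule ℂ H, IsPos J M' → M ≤ M' → M' = M

/-- Maximal negative subspace. -/
def IsMaxNeg (J : H →L[ℂ] H) (M : Submodule ℂ H) : Prop :=
  IsNeg J M ∧ ∀ M' : Submodule ℂ H, IsNeg J M' → M ≤ M' → M' = M

/-- Uniformly positive subspace. -/
def IsUnifPos (J : H →L[ℂ] H) (M : Submodule ℂ H) : Prop :=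
  IsClosed (M : Set H) ∧ ∃ α > (0:ℝ), ∀ f ∈ M, α * ‖f‖ ^ 2 ≤ (indef J f f).re

/-- Uniformly negative subspace. -/
def IsUnifNeg (J : H →L[ℂ] H) (M : Submodule ℂ H) : Prop :=
  IsClosed (M : Set H) ∧ ∃ α > (0:ℝ), ∀ f ∈ M, α * ‖f‖ ^ 2 ≤ -(indef J f f).re

/-- Maximal uniformly positive subspace. -/
def IsMaxUnifPos (J : H →L[ℂ] H) (M : Submodule ℂ H) : Prop :=
  IsUnifPos J M ∧ ∀ M' : Submodule ℂ H, IsUnifPos J M' → M ≤ M' → M' = M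

/-- Maximal uniformly negative subspace. -/
def IsMaxUnifNeg (J : H →L[ℂ] H) (M : Submodule ℂ H) : Prop :=
  IsUnifNeg J M ∧ ∀ M' : Submodule ℂ H, IsUnifNeg J M' → M ≤ M' → M' = M

/-- Two subspaces are `J`-orthogonal. -/
def JOrth (J : H →L[ℂ] H) (M N : Submodule ℂ H) : Prop :=
  ∀ f ∈ M, ∀ g ∈ N, indef J f g = 0

/-- Indices of nonnegative vectors of the family. -/
def Npos (J : H →L[ℂ] H) (F : ℕ → H) : Set ℕ := {n | 0 ≤ (indef J (F n) (F n)).re}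

/-- Indices of negative vectors of the family. -/
def Nneg (J : H →L[ℂ] H) (F : ℕ → H) : Set ℕ := {n | (indef J (F n) (F n)).re < 0}

/-- `M₊`: closed span of the nonnegative vectors of the family. -/
def Mpos (J : H →L[ℂ] H) (F : ℕ → H) : Submodule ℂ H :=
  (Submodule.span ℂ (F '' Npos J F)).topologicalClosure

/-- `M₋`: closed span of the negative vectors of the family. -/
def Mneg (J : H →L[ℂ] H) (F : ℕ → H) : Submodule ℂ H :=
  (Submodule.span ℂ (F '' Nneg J F)).topologicalClosure

/-- `J`-frame in the sense of Definition 3 of the paper, with frame bounds `A ≤ B`. -/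
def IsJFrame (J : H →L[ℂ] H) (F : ℕ → H) (A B : ℝ) : Prop :=
  0 < A ∧ A ≤ B ∧ IsMaxPos J (Mpos J F) ∧ IsMaxNeg J (Mneg J F) ∧
  (∀ f ∈ Submodule.span ℂ (F '' Npos J F),
    A * |(indef J f f).re| ≤ ∑' n : Npos J F, ‖indef J f (F ↑n)‖ ^ 2 ∧
    ∑' n : Npos J F, ‖indef J f (F ↑n)‖ ^ 2 ≤ B * |(indef J f f).re|) ∧
  (∀ f ∈ Submodule.span ℂ (F '' Nneg J F),
    A * |(indef J f f).re| ≤ ∑' n : Nneg J F, ‖indef J f (F ↑n)‖ ^ 2 ∧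
    ∑' n : Nneg J F, ‖indef J f (F ↑n)‖ ^ 2 ≤ B * |(indef J f f).re|)


section Aux
set_option linter.unusedSectionVars false

variable {J : H →L[ℂ] H} {F : ℕ → H} {A B : ℝ}

lemma indef_conj (hJ : IsFundSym J) (x y : H) :
    indef J x y = starRingEnd ℂ (indef J y x) := by
  unfold indef
  rw [← inner_conj_symm, hJ.1]

lemma indef_self_re (hJ : IsFundSym J) (x : H) :
    indef J x x = ((indef J x x).re : ℂ) := by
  have h : starRingEnd ℂ (indef J x x) = indef J x x := (indef_conj hJ x x).symm
  exact ((Complex.conj_eq_iff_re).1 h).symm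

lemma continuous_indef_left (J : H →L[ℂ] H) (y : H) :
    Continuous fun x : H => indef J x y :=
  J.continuous.inner continuous_const

lemma continuous_indef_self (J : H →L[ℂ] H) :
    Continuous fun x : H => indef J x x :=
  J.continuous.inner continuous_id

lemma indef_add_left (J : H →L[ℂ] H) (u v y : H) :
    indef J (u + v) y = indef J u y + indef J v y := by
  simp [indef, inner_add_left]

lemma indef_sum_left (J : H →L[ℂ] H) (T : Finset ℕ) (a : ℕ → ℂ) (v : ℕ → H) (y : H) :
    indef J (∑ n ∈ T, a n • v n) y = ∑ n ∈ T, starRingEnd ℂ (a n) * indef J (v n) y := by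
  unfold indef
  rw [map_sum, sum_inner]
  exact Finset.sum_congr rfl fun n _ => by rw [map_smul, inner_smul_left]

lemma indef_sum_right (J : H →L[ℂ] H) (T : Finset ℕ) (a : ℕ → ℂ) (v : ℕ → H) (x : H) :
    indef J x (∑ n ∈ T, a n • v n) = ∑ n ∈ T, a n * indef J x (v n) := by
  unfold indef
  rw [inner_sum]
  exact Finset.sum_congr rfl fun n _ => by rw [inner_smul_right]

lemma indef_eval (horth : ∀ n m : ℕ, n ≠ m → indef J (F n) (F m) = 0)
    (T : Finset ℕ) (a : ℕ → ℂ) (m : ℕ) :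
    indef J (∑ n ∈ T, a n • F n) (F m) =
      if m ∈ T then starRingEnd ℂ (a m) * indef J (F m) (F m) else 0 := by
  rw [indef_sum_left]
  split_ifs with hm
  · refine Finset.sum_eq_single_of_mem m hm fun n _ hne => ?_
    rw [horth n m hne, mul_zero]
  · refine Finset.sum_eq_zero fun n hn => ?_
    rw [horth n m (fun h => hm (h ▸ hn)), mul_zero]

lemma indef_self_sum (horth : ∀ n m : ℕ, n ≠ m → indef J (F n) (F m) = 0)
    (T : Finset ℕ) (a : ℕ → ℂ) :
    indef J (∑ n ∈ T, a n • F n) (∑ n ∈ T, a n • F n) =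
      ∑ n ∈ T, ((‖a n‖ ^ 2 : ℝ) : ℂ) * indef J (F n) (F n) := by
  rw [indef_sum_right]
  refine Finset.sum_congr rfl fun n hn => ?_
  rw [indef_eval horth, if_pos hn, ← mul_assoc, Complex.mul_conj']
  norm_cast

end Aux

section Aux2
set_option linter.unusedSectionVars false
set_option maxHeartbeats 1000000

variable {J : H →L[ℂ] H} {F : ℕ → H} {A B : ℝ}

lemma F_ne_zero
    (hbasis : ∀ f : H, ∃! c : ℕ → ℂ,
      Tendsto (fun N : ℕ => ∑ n ∈ Finset.range N, c n • F n) atTop (nhds f))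
    (n : ℕ) : F n ≠ 0 := by
  intro h0
  obtain ⟨c, hc, hu⟩ := hbasis 0
  classical
  set e : ℕ → ℂ := fun m => if m = n then 1 else 0 with he
  have h1 : Tendsto (fun N : ℕ => ∑ m ∈ Finset.range N, e m • F m)
      atTop (nhds (0:H)) := by
    have hz : ∀ N, ∑ m ∈ Finset.range N, e m • F m = 0 := by
      intro N
      refine Finset.sum_eq_zero fun m _ => ?_
      by_cases h : m = n
      · subst h; rw [h0, smul_zero]
      · simp [he, h]
    simpa [hz] using (tendsto_const_nhds : Tendsto (fun _ : ℕ => (0:H)) atTop _)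
  have h2 : Tendsto (fun N : ℕ => ∑ m ∈ Finset.range N, (fun _ : ℕ => (0:ℂ)) m • F m)
      atTop (nhds (0:H)) := by
    simpa using (tendsto_const_nhds : Tendsto (fun _ : ℕ => (0:H)) atTop _)
  have h3 := (hu _ h1).trans (hu _ h2).symm
  have h4 := congrFun h3 n
  simp [he] at h4

lemma Fmem_pos {n : ℕ} (hn : n ∈ Npos J F) : F n ∈ Mpos J F :=
  Submodule.le_topologicalClosure _ (Submodule.subset_span ⟨n, hn, rfl⟩)

lemma Fmem_neg {n : ℕ} (hn : n ∈ Nneg J F) : F n ∈ Mneg J F :=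
  Submodule.le_topologicalClosure _ (Submodule.subset_span ⟨n, hn, rfl⟩)

lemma R_pos_bounds (hJ : IsFundSym J) (hF : IsJFrame J F A B)
    (horth : ∀ n m : ℕ, n ≠ m → indef J (F n) (F m) = 0)
    (hbasis : ∀ f : H, ∃! c : ℕ → ℂ,
      Tendsto (fun N : ℕ => ∑ n ∈ Finset.range N, c n • F n) atTop (nhds f))
    {n : ℕ} (hn : n ∈ Npos J F) :
    A ≤ (indef J (F n) (F n)).re ∧ (indef J (F n) (F n)).re ≤ B := by
  set r := (indef J (F n) (F n)).re with hr
  have hsp : F n ∈ Submodule.span ℂ (F '' Npos J F) := Submodule.subset_span ⟨n, hn, rfl⟩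
  obtain ⟨h1, h2⟩ := hF.2.2.2.2.1 (F n) hsp
  have htsum : ∑' (m : ↥(Npos J F)), ‖indef J (F n) (F ↑m)‖ ^ 2 = r ^ 2 := by
    rw [tsum_eq_single (⟨n, hn⟩ : ↥(Npos J F)) ?_]
    · rw [indef_self_re hJ (F n), ← hr, Complex.norm_real, Real.norm_eq_abs, sq_abs]
    · intro m hm
      have hne : n ≠ (m : ℕ) := fun h => hm (Subtype.ext h.symm)
      rw [horth n m hne]
      simp
  have hrpos : 0 < r := hF.2.2.1.1.2 (F n) (Fmem_pos hn) (F_ne_zero hbasis n)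
  rw [htsum, abs_of_pos hrpos] at h1 h2
  constructor
  · nlinarith
  · nlinarith

lemma R_neg_bounds (hJ : IsFundSym J) (hF : IsJFrame J F A B)
    (horth : ∀ n m : ℕ, n ≠ m → indef J (F n) (F m) = 0)
    {n : ℕ} (hn : n ∈ Nneg J F) :
    A ≤ -(indef J (F n) (F n)).re ∧ -(indef J (F n) (F n)).re ≤ B := by
  set r := (indef J (F n) (F n)).re with hr
  have hsp : F n ∈ Submodule.span ℂ (F '' Nneg J F) := Submodule.subset_span ⟨n, hn, rfl⟩
  obtain ⟨h1, h2⟩ := hF.2.2.2.2.2 (F n) hsp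
  have htsum : ∑' (m : ↥(Nneg J F)), ‖indef J (F n) (F ↑m)‖ ^ 2 = r ^ 2 := by
    rw [tsum_eq_single (⟨n, hn⟩ : ↥(Nneg J F)) ?_]
    · rw [indef_self_re hJ (F n), ← hr, Complex.norm_real, Real.norm_eq_abs, sq_abs]
    · intro m hm
      have hne : n ≠ (m : ℕ) := fun h => hm (Subtype.ext h.symm)
      rw [horth n m hne]
      simp
  have hrneg : r < 0 := hn
  rw [htsum, abs_of_neg hrneg] at h1 h2
  constructor
  · nlinarith
  · nlinarith

lemma cover (J : H →L[ℂ] H) (F : ℕ → H) (n : ℕ) : n ∈ Npos J F ∨ n ∈ Nneg J F := by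
  rcases le_or_gt 0 ((indef J (F n) (F n)).re) with h | h
  · exact Or.inl h
  · exact Or.inr h

lemma A_le_absR (hJ : IsFundSym J) (hF : IsJFrame J F A B)
    (horth : ∀ n m : ℕ, n ≠ m → indef J (F n) (F m) = 0)
    (hbasis : ∀ f : H, ∃! c : ℕ → ℂ,
      Tendsto (fun N : ℕ => ∑ n ∈ Finset.range N, c n • F n) atTop (nhds f))
    (n : ℕ) : A ≤ |(indef J (F n) (F n)).re| := by
  rcases cover J F n with h | h
  · rw [abs_of_nonneg h]
    exact (R_pos_bounds hJ hF horth hbasis h).1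
  · rw [abs_of_neg h]
    exact (R_neg_bounds hJ hF horth h).1

lemma F_inj (hJ : IsFundSym J) (hF : IsJFrame J F A B)
    (horth : ∀ n m : ℕ, n ≠ m → indef J (F n) (F m) = 0)
    (hbasis : ∀ f : H, ∃! c : ℕ → ℂ,
      Tendsto (fun N : ℕ => ∑ n ∈ Finset.range N, c n • F n) atTop (nhds f)) :
    Function.Injective F := by
  intro m k h
  by_contra hne
  have h0 : indef J (F m) (F k) = 0 := horth m k hne
  rw [h] at h0
  have := A_le_absR hJ hF horth hbasis k
  rw [h0] at this
  simp at this
  exact absurd (lt_of_lt_of_le hF.1 this) (lt_irrefl 0)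

lemma orth_closure (horth : ∀ n m : ℕ, n ≠ m → indef J (F n) (F m) = 0)
    {N : Set ℕ} {n : ℕ} (hn : n ∉ N) :
    ∀ x ∈ (Submodule.span ℂ (F '' N)).topologicalClosure, indef J (F n) x = 0 := by
  intro x hx
  set φ : H →L[ℂ] ℂ := innerSL ℂ (J (F n)) with hφ
  have hker : (Submodule.span ℂ (F '' N)).topologicalClosure ≤ LinearMap.ker (φ : H →ₗ[ℂ] ℂ) := by
    apply Submodule.topologicalClosure_minimal
    · rw [Submodule.span_le]
      rintro y ⟨m, hm, rfl⟩
      have hne : n ≠ m := fun h => hn (h ▸ hm)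
      have : φ (F m) = 0 := horth n m hne
      simpa [LinearMap.mem_ker] using this
    · exact ContinuousLinearMap.isClosed_ker φ
  have hx0 := hker hx
  rw [LinearMap.mem_ker] at hx0
  exact hx0

lemma orth_closure' (hJ : IsFundSym J)
    (horth : ∀ n m : ℕ, n ≠ m → indef J (F n) (F m) = 0)
    {N : Set ℕ} {n : ℕ} (hn : n ∉ N) :
    ∀ x ∈ (Submodule.span ℂ (F '' N)).topologicalClosure, indef J x (F n) = 0 := by
  intro x hx
  rw [indef_conj hJ, orth_closure horth hn x hx, map_zero]

lemma decomp_unique {x u v : H} (hdis : Mpos J F ⊓ Mneg J F = ⊥)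
    (hu : u ∈ Mpos J F) (hv : v ∈ Mpos J F)
    (hxu : x - u ∈ Mneg J F) (hxv : x - v ∈ Mneg J F) : u = v := by
  have h1 : u - v ∈ Mpos J F := Submodule.sub_mem _ hu hv
  have h2 : u - v ∈ Mneg J F := by
    have := Submodule.sub_mem _ hxv hxu
    simpa using this
  have h3 : u - v ∈ Mpos J F ⊓ Mneg J F := ⟨h1, h2⟩
  rw [hdis] at h3
  simpa [sub_eq_zero] using h3


lemma span_bound (hJ : IsFundSym J)
    (horth : ∀ n m : ℕ, n ≠ m → indef J (F n) (F m) = 0)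
    (hinj : Function.Injective F) (hB : 0 ≤ B)
    {N : Set ℕ} {ε : ℝ} (hε1 : ε * ε = 1)
    (hε : ∀ n ∈ N, A ≤ ε * (indef J (F n) (F n)).re ∧ ε * (indef J (F n) (F n)).re ≤ B)
    (hA : 0 < A) (S : Finset ℕ) :
    ∀ x ∈ (Submodule.span ℂ (F '' N)).topologicalClosure,
      ∑ m ∈ S, ‖indef J x (F m)‖ ^ 2 ≤ B * (ε * (indef J x x).re) := by
  classical
  have hspan : ∀ x ∈ Submodule.span ℂ (F '' N),
      ∑ m ∈ S, ‖indef J x (F m)‖ ^ 2 ≤ B * (ε * (indef J x x).re) := by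
    intro x hx
    obtain ⟨c, hsupp, hsum⟩ := Submodule.mem_span_set.1 hx
    have hinjOn : Set.InjOn F (F ⁻¹' ↑c.support) := fun a _ b _ h => hinj h
    set T : Finset ℕ := c.support.preimage F hinjOn with hT
    have hTN : ∀ n ∈ T, n ∈ N := by
      intro n hn
      rw [hT, Finset.mem_preimage] at hn
      obtain ⟨m, hm, hFm⟩ := hsupp hn
      exact (hinj hFm) ▸ hm
    set a : ℕ → ℂ := fun n => c (F n) with ha
    have hx' : x = ∑ n ∈ T, a n • F n := by
      rw [← hsum, Finsupp.sum]
      refine (Finset.sum_preimage F c.support hinjOn (fun g => c g • g) ?_).symm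
      intro g hg hgr
      obtain ⟨m, _, hFm⟩ := hsupp hg
      exact absurd ⟨m, hFm⟩ hgr
    have hre : (indef J x x).re = ∑ n ∈ T, ‖a n‖ ^ 2 * (indef J (F n) (F n)).re := by
      rw [hx', indef_self_sum horth, Complex.re_sum]
      refine Finset.sum_congr rfl fun n _ => ?_
      rw [Complex.re_ofReal_mul]
    have hterm : ∀ m ∈ S, ‖indef J x (F m)‖ ^ 2 =
        if m ∈ T then ‖a m‖ ^ 2 * ((indef J (F m) (F m)).re) ^ 2 else 0 := by
      intro m _
      rw [hx', indef_eval horth]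
      split_ifs with h
      · rw [indef_self_re hJ (F m), norm_mul, RCLike.norm_conj, Complex.norm_real,
          Real.norm_eq_abs, mul_pow, sq_abs, Complex.ofReal_re]
      · simp
    calc ∑ m ∈ S, ‖indef J x (F m)‖ ^ 2
        = ∑ m ∈ S, (if m ∈ T then ‖a m‖ ^ 2 * ((indef J (F m) (F m)).re) ^ 2 else 0) :=
          Finset.sum_congr rfl hterm
      _ = ∑ m ∈ S ∩ T, ‖a m‖ ^ 2 * ((indef J (F m) (F m)).re) ^ 2 := by
          rw [Finset.sum_ite_mem]
      _ ≤ ∑ m ∈ T, ‖a m‖ ^ 2 * ((indef J (F m) (F m)).re) ^ 2 := by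
          refine Finset.sum_le_sum_of_subset_of_nonneg Finset.inter_subset_right
            fun m _ _ => by positivity
      _ ≤ ∑ m ∈ T, ‖a m‖ ^ 2 * (B * (ε * (indef J (F m) (F m)).re)) := by
          refine Finset.sum_le_sum fun m hm => ?_
          have h1 := (hε m (hTN m hm)).1
          have h2 := (hε m (hTN m hm)).2
          have hsq : ((indef J (F m) (F m)).re) ^ 2 = (ε * (indef J (F m) (F m)).re) ^ 2 := by
            have h1 : ε ^ 2 = 1 := by nlinarith [hε1]
            rw [mul_pow, h1, one_mul]
          rw [hsq]
          have h0 : 0 ≤ ε * (indef J (F m) (F m)).re := le_trans (le_of_lt hA) h1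
          have ht : (ε * (indef J (F m) (F m)).re) ^ 2 ≤ B * (ε * (indef J (F m) (F m)).re) := by
            nlinarith
          exact mul_le_mul_of_nonneg_left ht (by positivity)
      _ = B * (ε * (indef J x x).re) := by
          rw [hre, Finset.mul_sum, Finset.mul_sum]
          refine Finset.sum_congr rfl fun m _ => by ring
  intro x hx
  have hclosed : IsClosed {x : H |
      ∑ m ∈ S, ‖indef J x (F m)‖ ^ 2 ≤ B * (ε * (indef J x x).re)} := by
    apply isClosed_le
    · exact continuous_finset_sum S fun m _ => ((continuous_indef_left J (F m)).norm.pow 2)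
    · exact (continuous_const.mul (continuous_const.mul
        (Complex.continuous_re.comp (continuous_indef_self J))))
  have hsub : (↑(Submodule.span ℂ (F '' N)) : Set H) ⊆
      {x : H | ∑ m ∈ S, ‖indef J x (F m)‖ ^ 2 ≤ B * (ε * (indef J x x).re)} := hspan
  have hx' : x ∈ closure (↑(Submodule.span ℂ (F '' N)) : Set H) := by
    rw [← Submodule.topologicalClosure_coe]; exact hx
  exact closure_minimal hsub hclosed hx'


lemma norm_sq_eq_re_inner {K : Type} [NormedAddCommGroup K] [InnerProductSpace ℂ K] (v : K) :
    (@inner ℂ _ _ v v).re = ‖v‖ ^ 2 := by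
  have h := inner_self_eq_norm_sq (𝕜 := ℂ) v
  simpa using h

end Aux2


set_option maxHeartbeats 2000000 in
/-- Proposition on `𝔇`: for a `J`-orthogonal Schauder basis `F`
which is a `J`-frame, an element `f ∈ H` lies in the energetic manifold
`𝔇 = H ∩ Ĥ` (i.e. `f` is approximated by a sequence from `D = M₊ ∔ M₋`
converging simultaneously in `H` and in the completion `Ĥ = K`) iff the
sequence `{[f, fₙ]}` belongs to `l²(ℕ)`. -/
theorem stmt16 {K : Type} [NormedAddCommGroup K] [InnerProductSpace ℂ K]
    [CompleteSpace K]
    (J : H →L[ℂ] H) (hJ : IsFundSym J)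
    (F : ℕ → H) (A B : ℝ) (hF : IsJFrame J F A B)
    (horth : ∀ n m : ℕ, n ≠ m → indef J (F n) (F m) = 0)
    (hbasis : ∀ f : H, ∃! c : ℕ → ℂ,
      Tendsto (fun N : ℕ => ∑ n ∈ Finset.range N, c n • F n) atTop (nhds f))
    (hdis : Mpos J F ⊓ Mneg J F = ⊥)
    (ι : ↥(Mpos J F ⊔ Mneg J F) →ₗ[ℂ] K) (hdense : DenseRange ι)
    (P : ↥(Mpos J F ⊔ Mneg J F) →ₗ[ℂ] H)
    (hP : ∀ x : ↥(Mpos J F ⊔ Mneg J F), P x ∈ Mpos J F ∧ (x : H) - P x ∈ Mneg J F)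
    (hι : ∀ x y : ↥(Mpos J F ⊔ Mneg J F),
      ⟪ι x, ι y⟫ = indef J (P x) (P y) - indef J ((x : H) - P x) ((y : H) - P y)) :
    ∀ f : H,
      (∃ (g : K) (d : ℕ → ↥(Mpos J F ⊔ Mneg J F)),
        Tendsto (fun k => ((d k : H))) atTop (nhds f) ∧
        Tendsto (fun k => ι (d k)) atTop (nhds g)) ↔
      Summable (fun n : ℕ => ‖indef J f (F n)‖ ^ 2) := by
  classical
  have hA : (0:ℝ) < A := hF.1
  have hB0 : (0:ℝ) ≤ B := le_trans hA.le hF.2.1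
  have hinj : Function.Injective F := F_inj hJ hF horth hbasis
  have hεp : ∀ n ∈ Npos J F,
      A ≤ 1 * (indef J (F n) (F n)).re ∧ 1 * (indef J (F n) (F n)).re ≤ B := by
    intro n hn; rw [one_mul]; exact R_pos_bounds hJ hF horth hbasis hn
  have hεn : ∀ n ∈ Nneg J F,
      A ≤ (-1) * (indef J (F n) (F n)).re ∧ (-1) * (indef J (F n) (F n)).re ≤ B := by
    intro n hn; rw [neg_one_mul]; exact R_neg_bounds hJ hF horth hn
  intro f
  constructor
  · rintro ⟨g, d, hdf, hdg⟩
    have key : ∀ (k : ℕ) (S : Finset ℕ),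
        ∑ m ∈ S, ‖indef J ((d k : H)) (F m)‖ ^ 2 ≤ B * ‖ι (d k)‖ ^ 2 := by
      intro k S
      obtain ⟨hPm, hQm⟩ := hP (d k)
      set x := d k with hxdef
      have hxe : P x + ((x : H) - P x) = (x : H) := by abel
      have hsplit : ∀ m : ℕ, ‖indef J (x : H) (F m)‖ ^ 2 =
          ‖indef J (P x) (F m)‖ ^ 2 + ‖indef J ((x : H) - P x) (F m)‖ ^ 2 := by
        intro m
        have h5 : indef J (x : H) (F m) =
            indef J (P x) (F m) + indef J ((x : H) - P x) (F m) := by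
          rw [← indef_add_left, hxe]
        rcases cover J F m with hm | hm
        · have hm' : 0 ≤ (indef J (F m) (F m)).re := hm
          have h0 : indef J ((x : H) - P x) (F m) = 0 :=
            orth_closure' (N := Nneg J F) hJ horth (not_lt.mpr hm') _ hQm
          rw [h5, h0, add_zero]
          simp [h0]
        · have hm' : (indef J (F m) (F m)).re < 0 := hm
          have h0 : indef J (P x) (F m) = 0 :=
            orth_closure' (N := Npos J F) hJ horth (not_le.mpr hm') _ hPm
          rw [h5, h0, zero_add]
          simp [h0]
      calc ∑ m ∈ S, ‖indef J (x : H) (F m)‖ ^ 2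
          = ∑ m ∈ S, ‖indef J (P x) (F m)‖ ^ 2
              + ∑ m ∈ S, ‖indef J ((x : H) - P x) (F m)‖ ^ 2 := by
            rw [← Finset.sum_add_distrib]
            exact Finset.sum_congr rfl fun m _ => hsplit m
        _ ≤ B * (1 * (indef J (P x) (P x)).re)
              + B * ((-1) * (indef J ((x : H) - P x) ((x : H) - P x)).re) :=
            add_le_add
              (span_bound (N := Npos J F) hJ horth hinj hB0 (by norm_num) hεp hA S (P x) hPm)
              (span_bound (N := Nneg J F) hJ horth hinj hB0 (by norm_num) hεn hA S ((x : H) - P x) hQm)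
        _ = B * ‖ι x‖ ^ 2 := by
            rw [← norm_sq_eq_re_inner (ι x), hι x x, Complex.sub_re]
            ring
    refine summable_of_sum_range_le (c := B * ‖g‖ ^ 2) (fun n => by positivity) fun N => ?_
    have hleft : Tendsto (fun k => ∑ m ∈ Finset.range N, ‖indef J ((d k : H)) (F m)‖ ^ 2)
        atTop (nhds (∑ m ∈ Finset.range N, ‖indef J f (F m)‖ ^ 2)) := by
      refine tendsto_finset_sum _ fun m _ => ?_
      exact (((continuous_indef_left J (F m)).norm.pow 2).tendsto f).comp hdf
    have hright : Tendsto (fun k => B * ‖ι (d k)‖ ^ 2) atTop (nhds (B * ‖g‖ ^ 2)) :=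
      ((hdg.norm).pow 2).const_mul B
    exact le_of_tendsto_of_tendsto' hleft hright fun k => key k (Finset.range N)
  · intro hs
    obtain ⟨c, hc, -⟩ := hbasis f
    have hcoef : ∀ n, indef J f (F n) = starRingEnd ℂ (c n) * indef J (F n) (F n) := by
      intro n
      have h1 : Tendsto (fun N : ℕ => indef J (∑ m ∈ Finset.range N, c m • F m) (F n))
          atTop (nhds (indef J f (F n))) :=
        ((continuous_indef_left J (F n)).tendsto f).comp hc
      have h2 : Tendsto (fun N : ℕ => indef J (∑ m ∈ Finset.range N, c m • F m) (F n))
          atTop (nhds (starRingEnd ℂ (c n) * indef J (F n) (F n))) := by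
        refine tendsto_const_nhds.congr' ?_
        filter_upwards [eventually_ge_atTop (n + 1)] with N hN
        rw [indef_eval horth, if_pos (Finset.mem_range.2 (lt_of_lt_of_le (Nat.lt_succ_self n) hN))]
      exact tendsto_nhds_unique h1 h2
    have hnormcoef : ∀ n, ‖indef J f (F n)‖ ^ 2 = ‖c n‖ ^ 2 * ((indef J (F n) (F n)).re) ^ 2 := by
      intro n
      rw [hcoef n, indef_self_re hJ (F n), norm_mul, RCLike.norm_conj, Complex.norm_real,
        Real.norm_eq_abs, mul_pow, sq_abs, Complex.ofReal_re]
    have hmem : ∀ k : ℕ, (∑ n ∈ Finset.range k, c n • F n) ∈ Mpos J F ⊔ Mneg J F := by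
      intro k
      refine Submodule.sum_mem _ fun n _ => ?_
      rcases cover J F n with h | h
      · exact Submodule.mem_sup_left (Submodule.smul_mem _ _ (Fmem_pos h))
      · exact Submodule.mem_sup_right (Submodule.smul_mem _ _ (Fmem_neg h))
    set d : ℕ → ↥(Mpos J F ⊔ Mneg J F) :=
      fun k => ⟨∑ n ∈ Finset.range k, c n • F n, hmem k⟩ with hd
    have hnn : ∀ n, (0:ℝ) ≤ ‖indef J f (F n)‖ ^ 2 := fun n => by positivity
    have hkey : ∀ j k : ℕ, j ≤ k →
        ‖ι (d k) - ι (d j)‖ ^ 2 ≤ A⁻¹ * ∑ n ∈ Finset.Ico j k, ‖indef J f (F n)‖ ^ 2 := by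
      intro j k hjk
      set x := d k - d j with hxd
      have hx : (x : H) = ∑ n ∈ Finset.Ico j k, c n • F n := by
        have h0 : (x : H) = (∑ n ∈ Finset.range k, c n • F n)
            - (∑ n ∈ Finset.range j, c n • F n) := rfl
        rw [h0, Finset.sum_Ico_eq_sub _ hjk]
      set Tp := (Finset.Ico j k).filter (fun n => n ∈ Npos J F) with hTp
      set u : H := ∑ n ∈ Tp, c n • F n with hu'
      have hu : u ∈ Mpos J F :=
        Submodule.sum_mem _ fun n hn =>
          Submodule.smul_mem _ _ (Fmem_pos (Finset.mem_filter.1 hn).2)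
      have hxu : (x : H) - u
          = ∑ n ∈ (Finset.Ico j k).filter (fun n => ¬ n ∈ Npos J F), c n • F n := by
        rw [hx, hu', hTp,
          ← Finset.sum_filter_add_sum_filter_not (Finset.Ico j k) (fun n => n ∈ Npos J F)
            (fun n => c n • F n)]
        exact add_sub_cancel_left _ _
      have hxumem : (x : H) - u ∈ Mneg J F := by
        rw [hxu]
        refine Submodule.sum_mem _ fun n hn => ?_
        rcases cover J F n with h | h
        · exact absurd h (Finset.mem_filter.1 hn).2
        · exact Submodule.smul_mem _ _ (Fmem_neg h)
      have hPx : P x = u := decomp_unique hdis (hP x).1 hu (hP x).2 hxumem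
      have hsubι : ι (d k) - ι (d j) = ι x := (map_sub ι (d k) (d j)).symm
      have hupos : (indef J u u).re = ∑ n ∈ Tp, ‖c n‖ ^ 2 * (indef J (F n) (F n)).re := by
        rw [hu', indef_self_sum horth, Complex.re_sum]
        exact Finset.sum_congr rfl fun n _ => by rw [Complex.re_ofReal_mul]
      have huneg : (indef J ((x : H) - u) ((x : H) - u)).re
          = ∑ n ∈ (Finset.Ico j k).filter (fun n => ¬ n ∈ Npos J F),
              ‖c n‖ ^ 2 * (indef J (F n) (F n)).re := by
        rw [hxu, indef_self_sum horth, Complex.re_sum]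
        exact Finset.sum_congr rfl fun n _ => by rw [Complex.re_ofReal_mul]
      have hval : ‖ι x‖ ^ 2
          = ∑ n ∈ Finset.Ico j k, ‖c n‖ ^ 2 * |(indef J (F n) (F n)).re| := by
        rw [← norm_sq_eq_re_inner (ι x), hι x x, hPx, Complex.sub_re, hupos, huneg,
          ← Finset.sum_filter_add_sum_filter_not (Finset.Ico j k) (fun n => n ∈ Npos J F)
            (fun n => ‖c n‖ ^ 2 * |(indef J (F n) (F n)).re|)]
        rw [sub_eq_add_neg]
        congr 1
        · refine Finset.sum_congr rfl fun n hn => ?_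
          have h' : 0 ≤ (indef J (F n) (F n)).re := (Finset.mem_filter.1 hn).2
          rw [abs_of_nonneg h']
        · rw [← Finset.sum_neg_distrib]
          refine Finset.sum_congr rfl fun n hn => ?_
          have h2 := (Finset.mem_filter.1 hn).2
          have h' : (indef J (F n) (F n)).re < 0 := by
            rcases cover J F n with h | h
            · exact absurd h h2
            · exact h
          rw [abs_of_neg h']
          ring
      rw [hsubι, hval, Finset.mul_sum]
      refine Finset.sum_le_sum fun n _ => ?_
      have habs := A_le_absR hJ hF horth hbasis n
      rw [hnormcoef n]
      have h1 : A * |(indef J (F n) (F n)).re| ≤ ((indef J (F n) (F n)).re) ^ 2 := by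
        nlinarith [abs_nonneg ((indef J (F n) (F n)).re), sq_abs ((indef J (F n) (F n)).re)]
      have h2 : |(indef J (F n) (F n)).re| ≤ A⁻¹ * ((indef J (F n) (F n)).re) ^ 2 := by
        have h3 := mul_le_mul_of_nonneg_left h1 (inv_nonneg.mpr hA.le)
        rw [← mul_assoc, inv_mul_cancel₀ hA.ne', one_mul] at h3
        exact h3
      calc ‖c n‖ ^ 2 * |(indef J (F n) (F n)).re|
          ≤ ‖c n‖ ^ 2 * (A⁻¹ * ((indef J (F n) (F n)).re) ^ 2) :=
            mul_le_mul_of_nonneg_left h2 (by positivity)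
        _ = A⁻¹ * (‖c n‖ ^ 2 * ((indef J (F n) (F n)).re) ^ 2) := by ring
    set t : ℕ → ℝ := fun N => ∑' i : ℕ, ‖indef J f (F (i + N))‖ ^ 2 with ht
    have ht0 : Tendsto t atTop (nhds 0) :=
      tendsto_sum_nat_add (f := fun n => ‖indef J f (F n)‖ ^ 2)
    have htnn : ∀ N, 0 ≤ t N := fun N => tsum_nonneg fun i => hnn _
    have hcau : CauchySeq (fun k => ι (d k)) := by
      apply cauchySeq_of_le_tendsto_0 (b := fun N => Real.sqrt (A⁻¹ * t N)) ?_ ?_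
      · intro m n N hm hn
        have main : ∀ p q : ℕ, N ≤ p → p ≤ q →
            dist (ι (d q)) (ι (d p)) ≤ Real.sqrt (A⁻¹ * t N) := by
          intro p q hp hpq
          rw [dist_eq_norm]
          have h1 := hkey p q hpq
          have h2 : ∑ n ∈ Finset.Ico p q, ‖indef J f (F n)‖ ^ 2 ≤ t N := by
            calc ∑ n ∈ Finset.Ico p q, ‖indef J f (F n)‖ ^ 2
                ≤ ∑ n ∈ Finset.Ico N q, ‖indef J f (F n)‖ ^ 2 :=
                  Finset.sum_le_sum_of_subset_of_nonneg
                    (Finset.Ico_subset_Ico hp (le_refl q)) (fun n _ _ => hnn n)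
              _ = ∑ i ∈ Finset.range (q - N), ‖indef J f (F (N + i))‖ ^ 2 :=
                  Finset.sum_Ico_eq_sum_range _ _ _
              _ = ∑ i ∈ Finset.range (q - N), ‖indef J f (F (i + N))‖ ^ 2 := by
                  refine Finset.sum_congr rfl fun i _ => by rw [Nat.add_comm]
              _ ≤ t N := Summable.sum_le_tsum _ (fun i _ => hnn _) ((summable_nat_add_iff N).2 hs)
          refine (Real.le_sqrt (norm_nonneg _) ?_).2 ?_
          · exact mul_nonneg (inv_nonneg.mpr hA.le) (htnn N)
          · exact le_trans h1 (mul_le_mul_of_nonneg_left h2 (inv_nonneg.mpr hA.le))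
        rcases le_total m n with h | h
        · rw [dist_comm]
          exact main m n hm h
        · exact main n m hn h
      · have h1 : Tendsto (fun N => A⁻¹ * t N) atTop (nhds (A⁻¹ * 0)) := ht0.const_mul _
        rw [mul_zero] at h1
        have h2 := (Real.continuous_sqrt.tendsto 0).comp h1
        simpa [Function.comp_def] using h2
    obtain ⟨g, hg⟩ := cauchySeq_tendsto_of_complete hcau
    exact ⟨g, d, hc, hg⟩

end KreinStmt
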